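/- Let s and k be positive natural numbers and let μ > 0 be a real number with μ < ((k+s)^{k+s}/(s^s · k^k))^{1/k}. Set δ := (k+s)^{k+s}/(s^s · k^k · μ^k). Then δ > 1, and for every real μ* with 0 < μ* ≤ μ and every real x with 0 < x < μ*, one has (μ*)^s / (x^s · (μ* − x)^k) ≥ δ. -/

import Mathlib

lemma aux_amgm (s k : ℕ) (hs : 0 < s) (hk : 0 < k) (m x : ℝ) (hx : 0 < x) (hxm : x < m) :
    x ^ s * (m - x) ^ k * ((k : ℝ) + s) ^ (k + s) ≤ m ^ (k + s) * (s : ℝ) ^ s * (k : ℝ) ^ k := by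
  have hsR : (0:ℝ) < s := by exact_mod_cast hs
  have hkR : (0:ℝ) < k := by exact_mod_cast hk
  have hN : (0:ℝ) < (k:ℝ) + s := by linarith
  have hb : (0:ℝ) < m - x := by linarith
  set p₁ : ℝ := x * (((k:ℝ)+s)/s) with hp₁
  set p₂ : ℝ := (m - x) * (((k:ℝ)+s)/k) with hp₂
  have hp₁0 : 0 < p₁ := by positivity
  have hp₂0 : 0 < p₂ := by positivity
  have key := Real.geom_mean_le_arith_mean2_weighted
    (w₁ := (s:ℝ)/((k:ℝ)+s)) (w₂ := (k:ℝ)/((k:ℝ)+s)) (p₁ := p₁) (p₂ := p₂)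
    (by positivity) (by positivity) hp₁0.le hp₂0.le (by field_simp; ring)
  have hsum : (s:ℝ)/((k:ℝ)+s) * p₁ + (k:ℝ)/((k:ℝ)+s) * p₂ = m := by
    rw [hp₁, hp₂]; field_simp; ring
  rw [hsum] at key
  have key2 : (p₁ ^ ((s:ℝ)/((k:ℝ)+s)) * p₂ ^ ((k:ℝ)/((k:ℝ)+s))) ^ (k+s) ≤ m ^ (k+s) := by
    exact pow_le_pow_left₀ (by positivity) key _
  have hlhs : (p₁ ^ ((s:ℝ)/((k:ℝ)+s)) * p₂ ^ ((k:ℝ)/((k:ℝ)+s))) ^ (k+s)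
      = p₁ ^ s * p₂ ^ k := by
    rw [mul_pow, ← Real.rpow_natCast (p₁ ^ ((s:ℝ)/((k:ℝ)+s))) (k+s),
        ← Real.rpow_natCast (p₂ ^ ((k:ℝ)/((k:ℝ)+s))) (k+s),
        ← Real.rpow_mul hp₁0.le, ← Real.rpow_mul hp₂0.le]
    have e1 : (s:ℝ)/((k:ℝ)+s) * ((k+s : ℕ):ℝ) = (s:ℕ) := by push_cast; field_simp
    have e2 : (k:ℝ)/((k:ℝ)+s) * ((k+s : ℕ):ℝ) = (k:ℕ) := by push_cast; field_simp
    rw [e1, e2, Real.rpow_natCast, Real.rpow_natCast]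
  rw [hlhs] at key2
  have expand : p₁ ^ s * p₂ ^ k = x ^ s * (m-x) ^ k * (((k:ℝ)+s)^(k+s)) / ((s:ℝ)^s * (k:ℝ)^k) := by
    rw [hp₁, hp₂, mul_pow, mul_pow, div_pow, div_pow, pow_add ((k:ℝ)+s)]
    field_simp
  rw [expand] at key2
  have h := (div_le_iff₀ (by positivity)).mp key2
  linarith [h]

/-- If `μ < ((k+s)^(k+s)/(s^s k^k))^(1/k)` and `δ := (k+s)^(k+s)/(s^s k^k μ^k)`,
then `δ > 1` and `μ*^s/(x^s (μ*-x)^k) ≥ δ` for all `0 < μ* ≤ μ` and `0 < x < μ*`. -/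
theorem ratio_uniform_lower_bound
    (s k : ℕ) (hs : 0 < s) (hk : 0 < k)
    (μ : ℝ) (hμ0 : 0 < μ)
    (hμ : μ < (((k + s : ℕ) : ℝ) ^ (k + s) / ((s : ℝ) ^ s * (k : ℝ) ^ k)) ^ ((1 : ℝ) / k))
    (δ : ℝ) (hδ : δ = ((k + s : ℕ) : ℝ) ^ (k + s) / ((s : ℝ) ^ s * (k : ℝ) ^ k * μ ^ k)) :
    1 < δ ∧
      ∀ μstar : ℝ, 0 < μstar → μstar ≤ μ →
        ∀ x : ℝ, 0 < x → x < μstar →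
          δ ≤ μstar ^ s / (x ^ s * (μstar - x) ^ k) := by
  have hsR : (0:ℝ) < s := by exact_mod_cast hs
  have hkR : (0:ℝ) < k := by exact_mod_cast hk
  have hNcast : ((k + s : ℕ) : ℝ) = (k:ℝ) + s := by push_cast; ring
  set C : ℝ := ((k:ℝ) + s) ^ (k + s) / ((s : ℝ) ^ s * (k : ℝ) ^ k) with hC
  have hC0 : 0 < C := by positivity
  have hμk : μ ^ k < C := by
    rw [hNcast] at hμ
    have h1 : μ ^ (k:ℝ) < (C ^ ((1:ℝ)/k)) ^ (k:ℝ) :=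
      Real.rpow_lt_rpow hμ0.le hμ hkR
    rw [← Real.rpow_mul hC0.le, one_div, inv_mul_cancel₀ hkR.ne', Real.rpow_one,
      Real.rpow_natCast] at h1
    exact h1
  have hδval : δ = C / μ ^ k := by rw [hδ, hNcast, hC]; ring
  constructor
  · rw [hδval, lt_div_iff₀ (by positivity)]
    linarith
  · intro m hm0 hmμ x hx0 hxm
    have hkey := aux_amgm s k hs hk m x hx0 hxm
    have hmk : m ^ k ≤ μ ^ k := pow_le_pow_left₀ hm0.le hmμ k
    have hms : (0:ℝ) < m ^ s := by positivity
    have h2 : m ^ (k + s) ≤ μ ^ k * m ^ s := by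
      rw [pow_add]
      exact mul_le_mul_of_nonneg_right hmk hms.le
    have hbpos : (0:ℝ) < m - x := by linarith
    rw [hδval, div_le_div_iff₀ (by positivity) (by positivity)]
    calc C * (x ^ s * (m - x) ^ k)
        = x ^ s * (m - x) ^ k * ((k:ℝ)+s)^(k+s) / ((s:ℝ)^s * (k:ℝ)^k) := by
          rw [hC]; ring
      _ ≤ m ^ (k+s) * (s:ℝ)^s * (k:ℝ)^k / ((s:ℝ)^s * (k:ℝ)^k) := by
          gcongr
      _ = m ^ (k+s) := by
          rw [mul_assoc, mul_div_assoc, div_self (by positivity), mul_one]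
      _ ≤ μ ^ k * m ^ s := h2
      _ = m ^ s * μ ^ k := by ring
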